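/- Let X be a compact metric space, let T : X → X be a nonexpansive operator such that lim_{j→∞} Tʲ(y⁰) exists for every y⁰ ∈ X, and let ε > 0. Then there exist a positive integer k₀ and a δ > 0 such that for each finite sequence x⁰, x¹, …, x^{k₀} in X satisfying ρ(x^{i+1}, T(xⁱ)) ≤ δ for all i = 0,1,…,k₀−1, the inequality d(x^{k₀}, Fix(T)) ≤ ε holds. -/

import Mathlib

/-- Let `X` be a compact metric space and `T : X → X` a nonexpansive operator whose
iterates converge pointwise, and let `ε > 0`. Then there exist a positive integer `k₀`
and `δ > 0` such that every finite sequence `x⁰,…,x^{k₀}` in `X` with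
`dist (x^{i+1}) (T xⁱ) ≤ δ` for `i = 0,…,k₀−1` satisfies `d(x^{k₀}, Fix(T)) ≤ ε`. -/
theorem inexact_orbit_finite_near_fixed_point_set
    {X : Type*} [MetricSpace X] [CompactSpace X] (T : X → X)
    (hT : ∀ x y : X, dist (T x) (T y) ≤ dist x y)
    (hconv : ∀ y₀ : X, ∃ z : X,
      Filter.Tendsto (fun j : ℕ => T^[j] y₀) Filter.atTop (nhds z))
    (ε : ℝ) (hε : 0 < ε) :
    ∃ k₀ : ℕ, 0 < k₀ ∧ ∃ δ > 0, ∀ x : ℕ → X,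
      (∀ i < k₀, dist (x (i + 1)) (T (x i)) ≤ δ) →
      Metric.infDist (x k₀) {y : X | T y = y} ≤ ε := by
  by_cases hX : Nonempty X
  · set S : Set X := {y : X | T y = y} with hSdef
    have hTlip : LipschitzWith 1 T :=
      LipschitzWith.of_dist_le_mul (by simpa using hT)
    have hTc : Continuous T := hTlip.continuous
    -- every orbit limit is a fixed point
    have hfix : ∀ y : X, ∃ z ∈ S,
        Filter.Tendsto (fun j : ℕ => T^[j] y) Filter.atTop (nhds z) := by
      intro y
      obtain ⟨z, hz⟩ := hconv y
      refine ⟨z, ?_, hz⟩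
      have h1 : Filter.Tendsto (fun j : ℕ => T^[j + 1] y) Filter.atTop (nhds z) :=
        hz.comp (Filter.tendsto_add_atTop_nat 1)
      have h2 : Filter.Tendsto (fun j : ℕ => T (T^[j] y)) Filter.atTop (nhds (T z)) :=
        (hTc.continuousAt.tendsto).comp hz
      have heq : (fun j : ℕ => T^[j + 1] y) = fun j : ℕ => T (T^[j] y) := by
        funext j; exact Function.iterate_succ_apply' T j y
      rw [heq] at h1
      exact tendsto_nhds_unique h2 h1
    obtain ⟨y₀⟩ := hX
    obtain ⟨z₀, hz₀S, _⟩ := hfix y₀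
    have hSne : S.Nonempty := ⟨z₀, hz₀S⟩
    -- one step of T does not increase the distance to the fixed point set
    have hstep : ∀ w : X, Metric.infDist (T w) S ≤ Metric.infDist w S := by
      intro w
      by_contra h
      push_neg at h
      obtain ⟨p, hp, hdp⟩ := (Metric.infDist_lt_iff hSne).1 h
      have : Metric.infDist (T w) S ≤ dist w p := by
        calc Metric.infDist (T w) S ≤ dist (T w) p := Metric.infDist_le_dist_of_mem hp
          _ = dist (T w) (T p) := by rw [show T p = p from hp]
          _ ≤ dist w p := hT w p
      exact absurd hdp (not_lt.2 this)
    have hanti : ∀ w : X, ∀ k l : ℕ, k ≤ l →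
        Metric.infDist (T^[l] w) S ≤ Metric.infDist (T^[k] w) S := by
      intro w k l hkl
      induction l with
      | zero => simp_all
      | succ l ih =>
        rcases Nat.lt_or_ge k (l + 1) with h | h
        · have := ih (Nat.lt_succ_iff.1 h)
          calc Metric.infDist (T^[l + 1] w) S
              = Metric.infDist (T (T^[l] w)) S := by
                rw [Function.iterate_succ_apply' T l w]
            _ ≤ Metric.infDist (T^[l] w) S := hstep _
            _ ≤ _ := this
        · have : k = l + 1 := le_antisymm hkl h
          subst this; rfl
    -- for each point find a time when the orbit is ε/2-close to S
    have hpt : ∀ y : X, ∃ k : ℕ, Metric.infDist (T^[k] y) S < ε / 2 := by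
      intro y
      obtain ⟨z, hzS, hz⟩ := hfix y
      have : Filter.Tendsto (fun j : ℕ => dist (T^[j] y) z) Filter.atTop (nhds 0) :=
        tendsto_iff_dist_tendsto_zero.1 hz
      have := (this.eventually (gt_mem_nhds (half_pos hε))).exists
      obtain ⟨k, hk⟩ := this
      exact ⟨k, lt_of_le_of_lt (Metric.infDist_le_dist_of_mem hzS) hk⟩
    choose k hk using hpt
    have hcont : ∀ y : X, Continuous fun w => Metric.infDist (T^[k y] w) S :=
      fun y => (Metric.continuous_infDist_pt S).comp (hTc.iterate (k y))
    have hcover : Set.univ ⊆ ⋃ y : X, {w | Metric.infDist (T^[k y] w) S < ε / 2} :=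
      fun w _ => Set.mem_iUnion.2 ⟨w, hk w⟩
    obtain ⟨t, ht⟩ := isCompact_univ.elim_finite_subcover
      (fun y : X => {w | Metric.infDist (T^[k y] w) S < ε / 2})
      (fun y => isOpen_lt (hcont y) continuous_const) hcover
    set k₀ : ℕ := t.sup k + 1 with hk₀def
    have hk₀pos : 0 < k₀ := Nat.succ_pos _
    have hunif : ∀ w : X, Metric.infDist (T^[k₀] w) S ≤ ε / 2 := by
      intro w
      have := ht (Set.mem_univ w)
      simp only [Set.mem_iUnion] at this
      obtain ⟨y, hyt, hyw⟩ := this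
      have hky : k y ≤ k₀ := le_trans (Finset.le_sup hyt) (Nat.le_succ _)
      exact le_of_lt (lt_of_le_of_lt (hanti w (k y) k₀ hky) hyw)
    refine ⟨k₀, hk₀pos, ε / (2 * k₀), by positivity, fun x hx => ?_⟩
    set δ : ℝ := ε / (2 * k₀) with hδdef
    have hδpos : 0 < δ := by positivity
    -- pseudo-orbit tracking
    have htrack : ∀ i : ℕ, i ≤ k₀ → dist (x i) (T^[i] (x 0)) ≤ i * δ := by
      intro i
      induction i with
      | zero => simp
      | succ i ih =>
        intro hik
        have hi : i ≤ k₀ := Nat.le_of_succ_le hik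
        have h1 := hx i (Nat.lt_of_succ_le hik)
        have h2 : dist (T (x i)) (T^[i + 1] (x 0)) ≤ i * δ := by
          rw [Function.iterate_succ_apply' T i (x 0)]
          exact le_trans (hT _ _) (ih hi)
        calc dist (x (i + 1)) (T^[i + 1] (x 0))
            ≤ dist (x (i + 1)) (T (x i)) + dist (T (x i)) (T^[i + 1] (x 0)) :=
              dist_triangle _ _ _
          _ ≤ δ + i * δ := add_le_add h1 h2
          _ = (i + 1 : ℕ) * δ := by push_cast; ring
    have hK : (k₀ : ℝ) * δ = ε / 2 := by
      have : (k₀ : ℝ) ≠ 0 := Nat.cast_ne_zero.2 hk₀pos.ne'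
      field_simp [hδdef]
      rw [hδdef]; field_simp
    calc Metric.infDist (x k₀) S
        ≤ Metric.infDist (T^[k₀] (x 0)) S + dist (x k₀) (T^[k₀] (x 0)) :=
          Metric.infDist_le_infDist_add_dist
      _ ≤ ε / 2 + k₀ * δ := add_le_add (hunif _) (htrack k₀ le_rfl)
      _ = ε := by rw [hK]; ring
  · exact ⟨1, one_pos, 1, one_pos, fun x _ => absurd ⟨x 0⟩ hX⟩
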